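/- If G is a dihedral group D_{2n} (n ≥ 3) or a dicyclic group Q_{4n} (n ≥ 2), then the vertex connectivity and cyclic vertex connectivity of the power graph of G are never equal: κ(P(D_{2n})) = 1 while cκ(P(D_{2n})) > 1, and κ(P(Q_{4n})) = 2 while cκ(P(Q_{4n})) > 2. -/

import Mathlib

/-- The power graph of a group: distinct vertices are adjacent iff
one is a power of the other. -/
def powerGraph (G : Type*) [Group G] : SimpleGraph G where
  Adj x y := x ≠ y ∧ (x ∈ Subgroup.zpowers y ∨ y ∈ Subgroup.zpowers x)
  symm := ⟨fun x y ⟨h1, h2⟩ => ⟨h1.symm, h2.symm⟩⟩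
  loopless := ⟨fun x ⟨h, _⟩ => h rfl⟩

/-- `v` lies in a connected component containing a cycle. -/
def InCyclicComp {V : Type*} (Γ : SimpleGraph V) (v : V) : Prop :=
  ∃ w, Γ.Reachable v w ∧ ∃ c : Γ.Walk w w, c.IsCycle

/-- `S` is a cyclic vertex cutset: `Γ - S` is disconnected with at least two
components containing cycles. -/
def IsCyclicCutset {V : Type*} (Γ : SimpleGraph V) (S : Set V) : Prop :=
  ∃ u v : ↥(Sᶜ), ¬ (Γ.induce Sᶜ).Reachable u v ∧
    InCyclicComp (Γ.induce Sᶜ) u ∧ InCyclicComp (Γ.induce Sᶜ) v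

/-- A graph is cyclically separable if it has a cyclic vertex cutset. -/
def CyclicallySeparable {V : Type*} (Γ : SimpleGraph V) : Prop :=
  ∃ S : Set V, IsCyclicCutset Γ S

/-- Vertex connectivity: the least number of vertices whose deletion
disconnects the graph or reduces it to at most one vertex. -/
noncomputable def vertexConn {V : Type*} (Γ : SimpleGraph V) : ℕ :=
  sInf {k | ∃ S : Set V, S.ncard = k ∧
    (¬ (Γ.induce Sᶜ).Connected ∨ Sᶜ.Subsingleton)}

/-- Cyclic vertex connectivity: the least cardinality of a cyclic vertex
cutset, `∞` if there is none. -/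
noncomputable def cyclicVertexConn {V : Type*} (Γ : SimpleGraph V) : ℕ∞ :=
  sInf {k : ℕ∞ | ∃ S : Set V, IsCyclicCutset Γ S ∧ k = (S.ncard : ℕ∞)}

/-- `genClass x` is `[x]`, the set of generators of `⟨x⟩`. -/
def genClass {G : Type*} [Group G] (x : G) : Set G :=
  {y | Subgroup.zpowers y = Subgroup.zpowers x}

/-- Neighbourhood of a set of vertices. -/
def setNbhd {V : Type*} (Γ : SimpleGraph V) (A : Set V) : Set V :=
  {v | v ∉ A ∧ ∃ a ∈ A, Γ.Adj v a}

open Subgroup SimpleGraph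

section GraphHelpers
variable {V : Type*} {Γ : SimpleGraph V}

lemma walk_support_mem {A : Set V} (hA : ∀ ⦃x y : V⦄, x ∈ A → Γ.Adj x y → y ∈ A)
    {u v : V} (p : Γ.Walk u v) (hu : u ∈ A) : ∀ x ∈ p.support, x ∈ A := by
  induction p with
  | nil => intro x hx; rw [Walk.support_nil, List.mem_singleton] at hx; exact hx ▸ hu
  | cons h p ih =>
      intro x hx
      rw [Walk.support_cons, List.mem_cons] at hx
      rcases hx with rfl | hx
      · exact hu
      · exact ih (hA hu h) x hx

lemma reach_mem {A : Set V} (hA : ∀ ⦃x y : V⦄, x ∈ A → Γ.Adj x y → y ∈ A)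
    {u v : V} (h : Γ.Reachable u v) (hu : u ∈ A) : v ∈ A := by
  obtain ⟨p⟩ := h
  exact walk_support_mem hA p hu v p.end_mem_support

lemma reachable_eq_of_isolated {u v : V} (h : ∀ w, ¬ Γ.Adj u w) (hr : Γ.Reachable u v) :
    v = u :=
  reach_mem (A := {u}) (fun x y hx hxy => absurd hxy (by
    rw [Set.mem_singleton_iff] at hx; exact hx ▸ h y)) hr rfl

lemma no_cycle_at_isolated {u : V} (h : ∀ w, ¬ Γ.Adj u w) (c : Γ.Walk u u)
    (hc : c.IsCycle) : False := by
  cases c with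
  | nil => exact Walk.IsCycle.not_of_nil hc
  | cons had p => exact h _ had

lemma not_inCyclicComp_isolated {u : V} (h : ∀ w, ¬ Γ.Adj u w) : ¬ InCyclicComp Γ u := by
  rintro ⟨w, hr, c, hc⟩
  have hw : w = u := reachable_eq_of_isolated h hr
  subst hw
  exact no_cycle_at_isolated h c hc

lemma cycle_not_in_pair {a b w : V} {c : Γ.Walk w w} (hc : c.IsCycle)
    (h : ∀ x ∈ c.support, x = a ∨ x = b) : False := by
  classical
  have h3 := hc.three_le_length
  have hnd : c.support.tail.Nodup := hc.support_nodup
  have hlen : c.support.tail.length = c.length := by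
    rw [List.length_tail, Walk.length_support]; omega
  have hcard : c.support.tail.toFinset.card = c.support.tail.length :=
    List.toFinset_card_of_nodup hnd
  have hsub : c.support.tail.toFinset ⊆ {a, b} := by
    intro x hx
    rcases h x (List.mem_of_mem_tail (List.mem_toFinset.mp hx)) with rfl | rfl <;> simp
  have hle := Finset.card_le_card hsub
  have h2 : ({a, b} : Finset V).card ≤ 2 := (Finset.card_insert_le _ _).trans (by simp)
  omega

lemma preconn_of_hub {W : Type*} {Δ : SimpleGraph W} (g : W)
    (h : ∀ v, Δ.Reachable v g) : Δ.Preconnected := fun u v => (h u).trans (h v).symm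

lemma not_cyclicCutset_of_preconn {S : Set V} (h : (Γ.induce Sᶜ).Preconnected) :
    ¬ IsCyclicCutset Γ S := by
  rintro ⟨u, v, hnr, -, -⟩
  exact hnr (h u v)

lemma adj_one {G : Type*} [Group G] {x : G} (h : x ≠ 1) : (powerGraph G).Adj x 1 :=
  show x ≠ 1 ∧ (x ∈ zpowers 1 ∨ (1:G) ∈ zpowers x) from ⟨h, Or.inr (one_mem _)⟩

lemma adj_of_mem_zpowers {G : Type*} [Group G] {x y : G} (h : x ≠ y) (hm : x ∈ zpowers y) :
    (powerGraph G).Adj x y :=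
  show x ≠ y ∧ (x ∈ zpowers y ∨ y ∈ zpowers x) from ⟨h, Or.inl hm⟩

lemma preconn_compl_of_one_not_mem {G : Type*} [Group G] {S : Set G} (h1 : (1:G) ∉ S) :
    ((powerGraph G).induce Sᶜ).Preconnected := by
  apply preconn_of_hub (⟨1, h1⟩ : ↥Sᶜ)
  rintro ⟨v, hv⟩
  by_cases hv1 : v = 1
  · subst hv1; exact Reachable.refl _
  · exact Adj.reachable (adj_one hv1)

lemma zmod_cast_ne {N a b : ℕ} (ha : a < N) (hb : b < N) (hne : a ≠ b) :
    (a : ZMod N) ≠ (b : ZMod N) := fun h => hne (by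
  rw [← ZMod.val_cast_of_lt ha, ← ZMod.val_cast_of_lt hb, h])

lemma not_subsing_compl_singleton {a b c x : V} (hab : a ≠ b) (hac : a ≠ c) (hbc : b ≠ c) :
    ¬ ({x}ᶜ : Set V).Subsingleton := by
  intro h
  by_cases hax : a = x
  · exact hbc (h (Set.mem_compl_singleton_iff.mpr (hax ▸ hab.symm))
      (Set.mem_compl_singleton_iff.mpr (hax ▸ hac.symm)))
  · by_cases hbx : b = x
    · exact hac (h (Set.mem_compl_singleton_iff.mpr hax)
        (Set.mem_compl_singleton_iff.mpr (hbx ▸ hbc.symm)))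
    · exact hab (h (Set.mem_compl_singleton_iff.mpr hax)
        (Set.mem_compl_singleton_iff.mpr hbx))

lemma sInf_eq_one {K : Set ℕ} (h1 : 1 ∈ K) (h0 : 0 ∉ K) : sInf K = 1 := by
  have hm := Nat.sInf_mem (⟨1, h1⟩ : K.Nonempty)
  have hle := Nat.sInf_le h1
  rcases (by omega : sInf K = 0 ∨ sInf K = 1) with h | h
  · rw [h] at hm; exact absurd hm h0
  · exact h

lemma sInf_eq_two {K : Set ℕ} (h2 : 2 ∈ K) (h0 : 0 ∉ K) (h1 : 1 ∉ K) : sInf K = 2 := by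
  have hm := Nat.sInf_mem (⟨2, h2⟩ : K.Nonempty)
  have hle := Nat.sInf_le h2
  rcases (by omega : sInf K = 0 ∨ sInf K = 1 ∨ sInf K = 2) with h | h | h
  · rw [h] at hm; exact absurd hm h0
  · rw [h] at hm; exact absurd hm h1
  · exact h

lemma lt_cyclicVertexConn (c : ℕ)
    (h : ∀ S, IsCyclicCutset Γ S → c + 1 ≤ S.ncard) : (c : ℕ∞) < cyclicVertexConn Γ := by
  have hle : ((c+1 : ℕ) : ℕ∞) ≤ cyclicVertexConn Γ := by
    apply le_sInf
    rintro b ⟨S, hS, rfl⟩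
    exact_mod_cast h S hS
  exact lt_of_lt_of_le (by exact_mod_cast Nat.lt_succ_self c) hle

end GraphHelpers

section Dihedral

lemma r_pow {n : ℕ} (j : ZMod n) (k : ℕ) :
    (DihedralGroup.r j) ^ k = DihedralGroup.r (j * (k : ZMod n)) := by
  induction k with
  | zero => simp
  | succ k ih => rw [pow_succ, ih, DihedralGroup.r_mul_r]; congr 1; push_cast; ring

lemma mem_zpowers_r {n : ℕ} [NeZero n] {j : ZMod n} {y : DihedralGroup n}
    (h : y ∈ zpowers (DihedralGroup.r j)) : ∃ i, y = DihedralGroup.r i := by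
  rw [← mem_powers_iff_mem_zpowers] at h
  obtain ⟨k, hk⟩ := (Submonoid.mem_powers_iff _ _).mp h
  exact ⟨_, by rw [← hk, r_pow]⟩

lemma mem_zpowers_sr {n : ℕ} [NeZero n] {i : ZMod n} {y : DihedralGroup n}
    (h : y ∈ zpowers (DihedralGroup.sr i)) : y = 1 ∨ y = DihedralGroup.sr i := by
  rw [← mem_powers_iff_mem_zpowers] at h
  obtain ⟨k, hk⟩ := (Submonoid.mem_powers_iff _ _).mp h
  have hsq : (DihedralGroup.sr i) ^ 2 = 1 := by rw [sq, DihedralGroup.sr_mul_self]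
  rw [pow_eq_pow_mod k hsq] at hk
  rcases Nat.mod_two_eq_zero_or_one k with h2 | h2 <;> rw [h2] at hk
  · left; rw [← hk, pow_zero]
  · right; rw [← hk, pow_one]

lemma d_adj_sr {n : ℕ} [NeZero n] {i : ZMod n} {y : DihedralGroup n}
    (h : (powerGraph (DihedralGroup n)).Adj (DihedralGroup.sr i) y) : y = 1 := by
  obtain ⟨hne, hm | hm⟩ : _ ≠ _ ∧ (_ ∨ _) := h
  · exfalso
    cases y with
    | r j =>
        obtain ⟨i', hi⟩ := mem_zpowers_r hm
        exact (by cases hi)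
    | sr j =>
        rcases mem_zpowers_sr hm with h1 | h1
        · rw [DihedralGroup.one_def] at h1; exact (by cases h1)
        · rw [DihedralGroup.sr.injEq] at h1; exact hne (by rw [h1])
  · rcases mem_zpowers_sr hm with h1 | h1
    · exact h1
    · exact absurd h1.symm hne

lemma d_r_mem_zpowers_r_one {n : ℕ} [NeZero n] (j : ZMod n) :
    DihedralGroup.r j ∈ zpowers (DihedralGroup.r 1) := by
  rw [← mem_powers_iff_mem_zpowers]
  exact (Submonoid.mem_powers_iff _ _).mpr
    ⟨j.val, by rw [DihedralGroup.r_one_pow, ZMod.natCast_rightInverse j]⟩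

lemma d_vertexConn {n : ℕ} (hn : 3 ≤ n) : vertexConn (powerGraph (DihedralGroup n)) = 1 := by
  haveI : NeZero n := ⟨by omega⟩
  have h10 : (1 : ZMod n) ≠ 0 := by
    have := zmod_cast_ne (N := n) (a := 1) (b := 0) (by omega) (by omega) (by omega)
    simpa using this
  unfold vertexConn
  apply sInf_eq_one
  · refine ⟨{1}, Set.ncard_singleton 1, Or.inl ?_⟩
    intro hconn
    have hsr : ∀ i : ZMod n, DihedralGroup.sr i ∈ ({(1 : DihedralGroup n)}ᶜ : Set _) := by
      intro i h
      rw [Set.mem_singleton_iff, DihedralGroup.one_def] at h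
      exact (by cases h)
    have hiso : ∀ w, ¬ ((powerGraph (DihedralGroup n)).induce {(1:DihedralGroup n)}ᶜ).Adj
        ⟨DihedralGroup.sr 0, hsr 0⟩ w := by
      intro w hadj
      have h2 : (powerGraph (DihedralGroup n)).Adj (DihedralGroup.sr 0) w.val := hadj
      exact w.prop (by rw [Set.mem_singleton_iff]; exact d_adj_sr h2)
    have hr := hconn.preconnected ⟨DihedralGroup.sr 0, hsr 0⟩ ⟨DihedralGroup.sr 1, hsr 1⟩
    have heq := reachable_eq_of_isolated hiso hr
    rw [Subtype.mk.injEq, DihedralGroup.sr.injEq] at heq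
    exact h10 heq
  · rintro ⟨S, hcard, hbad⟩
    have hS : S = ∅ := (Set.ncard_eq_zero (Set.toFinite S)).mp hcard
    subst hS
    rcases hbad with hbad | hbad
    · exact hbad ((connected_iff _).mpr ⟨preconn_compl_of_one_not_mem (by simp), ⟨⟨1, by simp⟩⟩⟩)
    · have h1 : (1 : DihedralGroup n) ∈ ((∅ : Set (DihedralGroup n))ᶜ) := by simp
      have h2 : DihedralGroup.sr 0 ∈ ((∅ : Set (DihedralGroup n))ᶜ) := by simp
      have heq := hbad h1 h2
      rw [DihedralGroup.one_def] at heq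
      exact (by cases heq)

lemma d_cutset {n : ℕ} (hn : 3 ≤ n) (S : Set (DihedralGroup n))
    (hS : IsCyclicCutset (powerGraph (DihedralGroup n)) S) : 2 ≤ S.ncard := by
  haveI : NeZero n := ⟨by omega⟩
  have h10 : (1 : ZMod n) ≠ 0 := by
    have := zmod_cast_ne (N := n) (a := 1) (b := 0) (by omega) (by omega) (by omega)
    simpa using this
  by_contra hlt
  push_neg at hlt
  rcases (by omega : S.ncard = 0 ∨ S.ncard = 1) with h | h
  · have hS0 : S = ∅ := (Set.ncard_eq_zero (Set.toFinite S)).mp h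
    subst hS0
    exact not_cyclicCutset_of_preconn (preconn_compl_of_one_not_mem (by simp)) hS
  · obtain ⟨x, rfl⟩ := Set.ncard_eq_one.mp h
    by_cases hx : x = 1
    · subst hx
      obtain ⟨u, v, hnr, hu, hv⟩ := hS
      have hr1 : DihedralGroup.r 1 ∈ ({(1:DihedralGroup n)}ᶜ : Set _) := by
        intro hmem
        rw [Set.mem_singleton_iff, DihedralGroup.one_def, DihedralGroup.r.injEq] at hmem
        exact h10 hmem
      have key : ∀ t : ↥({(1:DihedralGroup n)}ᶜ : Set _),
          InCyclicComp ((powerGraph (DihedralGroup n)).induce {(1:DihedralGroup n)}ᶜ) t →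
          ((powerGraph (DihedralGroup n)).induce {(1:DihedralGroup n)}ᶜ).Reachable t
            ⟨DihedralGroup.r 1, hr1⟩ := by
        rintro ⟨t, ht⟩ hic
        cases t with
        | sr i =>
            exfalso
            refine not_inCyclicComp_isolated ?_ hic
            intro w hadj
            have h2 : (powerGraph (DihedralGroup n)).Adj (DihedralGroup.sr i) w.val := hadj
            exact w.prop (by rw [Set.mem_singleton_iff]; exact d_adj_sr h2)
        | r j =>
            by_cases hj : j = 1
            · subst hj; exact Reachable.refl _
            · refine Adj.reachable ?_
              show (powerGraph (DihedralGroup n)).Adj (DihedralGroup.r j) (DihedralGroup.r 1)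
              exact adj_of_mem_zpowers
                (by rw [Ne, DihedralGroup.r.injEq]; exact hj) (d_r_mem_zpowers_r_one j)
      exact hnr ((key u hu).trans ((key v hv).symm))
    · refine not_cyclicCutset_of_preconn (preconn_compl_of_one_not_mem ?_) hS
      intro hmem
      exact hx (Set.mem_singleton_iff.mp hmem).symm

end Dihedral

section Quaternion

lemma zmm {m : ℕ} : ((m : ZMod (2*m)) + m = 0) := by
  rw [← Nat.cast_add, ← two_mul]; exact ZMod.natCast_self _

lemma zneg_m {m : ℕ} : (-(m : ZMod (2*m)) = m) := neg_eq_of_add_eq_zero_left zmm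

lemma q_h10 {m : ℕ} (hm : 2 ≤ m) : (1 : ZMod (2*m)) ≠ 0 := by
  have := zmod_cast_ne (N := 2*m) (a := 1) (b := 0) (by omega) (by omega) (by omega)
  simpa using this

lemma q_hm0 {m : ℕ} (hm : 2 ≤ m) : ((m : ℕ) : ZMod (2*m)) ≠ 0 := by
  have := zmod_cast_ne (N := 2*m) (a := m) (b := 0) (by omega) (by omega) (by omega)
  simpa using this

lemma q_hm1 {m : ℕ} (hm : 2 ≤ m) : ((m : ℕ) : ZMod (2*m)) ≠ 1 := by
  have := zmod_cast_ne (N := 2*m) (a := m) (b := 1) (by omega) (by omega) (by omega)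
  simpa using this

lemma q_h2cast {m : ℕ} (hm : 2 ≤ m) : ((2 : ℕ) : ZMod (2*m)) ≠ 0 := by
  rw [Ne, ZMod.natCast_eq_zero_iff]
  intro h
  have := Nat.le_of_dvd (by omega) h
  omega

lemma q_hneg1 {m : ℕ} (hm : 2 ≤ m) : (-1 : ZMod (2*m)) ≠ 1 := by
  intro h
  apply q_h2cast hm
  have h2 : (1 : ZMod (2*m)) + 1 = 0 := by nth_rewrite 1 [← h]; ring
  calc ((2:ℕ) : ZMod (2*m)) = (1 : ZMod (2*m)) + 1 := by push_cast; ring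
    _ = 0 := h2

lemma q_hneg0 {m : ℕ} (hm : 2 ≤ m) : (-1 : ZMod (2*m)) ≠ 0 := by
  intro h
  exact q_h10 hm (neg_eq_zero.mp h)

lemma q_a_pow {m : ℕ} (j : ZMod (2*m)) (k : ℕ) :
    (QuaternionGroup.a j) ^ k = QuaternionGroup.a (j * (k : ZMod (2*m))) := by
  induction k with
  | zero => simp
  | succ k ih => rw [pow_succ, ih, QuaternionGroup.a_mul_a]; congr 1; push_cast; ring

lemma q_mem_zpowers_a {m : ℕ} [NeZero m] {j : ZMod (2*m)} {y : QuaternionGroup m}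
    (h : y ∈ zpowers (QuaternionGroup.a j)) : ∃ i, y = QuaternionGroup.a i := by
  rw [← mem_powers_iff_mem_zpowers] at h
  obtain ⟨k, hk⟩ := (Submonoid.mem_powers_iff _ _).mp h
  exact ⟨_, by rw [← hk, q_a_pow]⟩

lemma q_a_mem_zpowers_a {m : ℕ} [NeZero m] {g : ZMod (2*m)} (hg : g = 1 ∨ g = -1)
    (j : ZMod (2*m)) : QuaternionGroup.a j ∈ zpowers (QuaternionGroup.a g) := by
  rw [← mem_powers_iff_mem_zpowers]
  rcases hg with rfl | rfl
  · exact (Submonoid.mem_powers_iff _ _).mpr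
      ⟨j.val, by rw [q_a_pow]; congr 1; rw [one_mul, ZMod.natCast_rightInverse j]⟩
  · exact (Submonoid.mem_powers_iff _ _).mpr
      ⟨(-j).val, by rw [q_a_pow]; congr 1; rw [ZMod.natCast_rightInverse (-j)]; ring⟩

lemma q_mem_zpowers_xa {m : ℕ} [NeZero m] {j : ZMod (2*m)} {y : QuaternionGroup m}
    (h : y ∈ zpowers (QuaternionGroup.xa j)) :
    y = 1 ∨ y = QuaternionGroup.xa j ∨ y = QuaternionGroup.a (m : ZMod (2*m)) ∨
      y = QuaternionGroup.xa (j + (m : ZMod (2*m))) := by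
  rw [← mem_powers_iff_mem_zpowers] at h
  obtain ⟨k, hk⟩ := (Submonoid.mem_powers_iff _ _).mp h
  rw [pow_eq_pow_mod k (QuaternionGroup.xa_pow_four j)] at hk
  have h4 : k % 4 < 4 := Nat.mod_lt _ (by omega)
  set q := k % 4 with hq
  interval_cases q
  · left; rw [← hk, pow_zero]
  · right; left; rw [← hk, pow_one]
  · right; right; left; rw [← hk, QuaternionGroup.xa_sq]
  · right; right; right
    rw [← hk, pow_succ, QuaternionGroup.xa_sq, QuaternionGroup.a_mul_xa]
    congr 1
    rw [sub_eq_add_neg, zneg_m]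

lemma q_am_mem_zpowers_xa {m : ℕ} [NeZero m] (i : ZMod (2*m)) :
    QuaternionGroup.a (m : ZMod (2*m)) ∈ zpowers (QuaternionGroup.xa i) := by
  rw [← mem_powers_iff_mem_zpowers]
  exact (Submonoid.mem_powers_iff _ _).mpr ⟨2, QuaternionGroup.xa_sq i⟩

lemma q_adj_xa {m : ℕ} [NeZero m] {i : ZMod (2*m)} {y : QuaternionGroup m}
    (h : (powerGraph (QuaternionGroup m)).Adj (QuaternionGroup.xa i) y) :
    y = 1 ∨ y = QuaternionGroup.a (m : ZMod (2*m)) ∨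
      y = QuaternionGroup.xa (i + (m : ZMod (2*m))) := by
  obtain ⟨hne, hmem | hmem⟩ : _ ≠ _ ∧ (_ ∨ _) := h
  · cases y with
    | a j =>
        exfalso
        obtain ⟨i', hi⟩ := q_mem_zpowers_a hmem
        exact (by cases hi)
    | xa j =>
        rcases q_mem_zpowers_xa hmem with h1 | h1 | h1 | h1
        · rw [QuaternionGroup.one_def] at h1
          exact absurd h1 (fun hh => (by cases hh))
        · rw [QuaternionGroup.xa.injEq] at h1; exact absurd (by rw [h1]) hne
        · exact absurd h1 (fun hh => (by cases hh))
        · rw [QuaternionGroup.xa.injEq] at h1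
          right; right
          congr 1
          rw [h1, add_assoc, zmm, add_zero]
  · rcases q_mem_zpowers_xa hmem with h1 | h1 | h1 | h1
    · exact Or.inl h1
    · exact absurd h1.symm hne
    · exact Or.inr (Or.inl h1)
    · exact Or.inr (Or.inr h1)

lemma q_preconn {m : ℕ} [NeZero m] (S : Set (QuaternionGroup m)) {g : ZMod (2*m)}
    (hg : g = 1 ∨ g = -1) (hgS : QuaternionGroup.a g ∉ S)
    (hmS : QuaternionGroup.a (m : ZMod (2*m)) ∉ S) :
    ((powerGraph (QuaternionGroup m)).induce Sᶜ).Preconnected := by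
  have hstep : ∀ (x : QuaternionGroup m) (hx : x ∈ Sᶜ), x ∈ zpowers (QuaternionGroup.a g) →
      ((powerGraph (QuaternionGroup m)).induce Sᶜ).Reachable ⟨x, hx⟩
        ⟨QuaternionGroup.a g, hgS⟩ := by
    intro x hx hmem
    by_cases hxg : x = QuaternionGroup.a g
    · subst hxg; exact Reachable.refl _
    · refine Adj.reachable ?_
      show (powerGraph (QuaternionGroup m)).Adj x (QuaternionGroup.a g)
      exact adj_of_mem_zpowers hxg hmem
  apply preconn_of_hub (⟨QuaternionGroup.a g, hgS⟩ : ↥Sᶜ)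
  rintro ⟨v, hv⟩
  cases v with
  | a j => exact hstep _ hv (q_a_mem_zpowers_a hg j)
  | xa i =>
      have h1 : ((powerGraph (QuaternionGroup m)).induce Sᶜ).Adj ⟨QuaternionGroup.xa i, hv⟩
          ⟨QuaternionGroup.a (m : ZMod (2*m)), hmS⟩ := by
        show (powerGraph (QuaternionGroup m)).Adj (QuaternionGroup.xa i)
          (QuaternionGroup.a (m : ZMod (2*m)))
        exact show QuaternionGroup.xa i ≠ QuaternionGroup.a (m : ZMod (2*m)) ∧
          (QuaternionGroup.xa i ∈ zpowers (QuaternionGroup.a (m : ZMod (2*m))) ∨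
            QuaternionGroup.a (m : ZMod (2*m)) ∈ zpowers (QuaternionGroup.xa i)) from
          ⟨fun hh => (by cases hh), Or.inr (q_am_mem_zpowers_xa i)⟩
      exact h1.reachable.trans (hstep _ hmS (q_a_mem_zpowers_a hg _))

lemma q_xa_mem {m : ℕ} (i : ZMod (2*m)) :
    QuaternionGroup.xa i ∈
      (({1, QuaternionGroup.a (m : ZMod (2*m))} : Set (QuaternionGroup m))ᶜ) := by
  simp only [Set.mem_compl_iff, Set.mem_insert_iff, Set.mem_singleton_iff]
  rintro (h | h)
  · rw [QuaternionGroup.one_def] at h; exact (by cases h)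
  · exact (by cases h)

lemma q_a1_mem {m : ℕ} (hm : 2 ≤ m) :
    QuaternionGroup.a 1 ∈
      (({1, QuaternionGroup.a (m : ZMod (2*m))} : Set (QuaternionGroup m))ᶜ) := by
  simp only [Set.mem_compl_iff, Set.mem_insert_iff, Set.mem_singleton_iff]
  rintro (h | h)
  · rw [QuaternionGroup.one_def, QuaternionGroup.a.injEq] at h
    exact q_h10 hm h
  · rw [QuaternionGroup.a.injEq] at h
    exact q_hm1 hm h.symm

lemma q_pair_closed {m : ℕ} [NeZero m] (hm : 2 ≤ m) (i : ZMod (2*m)) :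
    ∀ ⦃x y : ↥(({1, QuaternionGroup.a (m : ZMod (2*m))} : Set (QuaternionGroup m))ᶜ)⦄,
      x ∈ {z : ↥(({1, QuaternionGroup.a (m : ZMod (2*m))} : Set (QuaternionGroup m))ᶜ) |
            z.val = QuaternionGroup.xa i ∨ z.val = QuaternionGroup.xa (i + (m : ZMod (2*m)))} →
      ((powerGraph (QuaternionGroup m)).induce
        ({1, QuaternionGroup.a (m : ZMod (2*m))} : Set (QuaternionGroup m))ᶜ).Adj x y →
      y ∈ {z : ↥(({1, QuaternionGroup.a (m : ZMod (2*m))} : Set (QuaternionGroup m))ᶜ) |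
            z.val = QuaternionGroup.xa i ∨ z.val = QuaternionGroup.xa (i + (m : ZMod (2*m)))} := by
  intro x y hx hxy
  have hadj : (powerGraph (QuaternionGroup m)).Adj x.val y.val := hxy
  have hyS := y.prop
  simp only [Set.mem_compl_iff, Set.mem_insert_iff, Set.mem_singleton_iff] at hyS
  push_neg at hyS
  rcases hx with h | h
  · rw [h] at hadj
    rcases q_adj_xa hadj with h1 | h1 | h1
    · exact absurd h1 hyS.1
    · exact absurd h1 hyS.2
    · exact Or.inr h1
  · rw [h] at hadj
    rcases q_adj_xa hadj with h1 | h1 | h1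
    · exact absurd h1 hyS.1
    · exact absurd h1 hyS.2
    · left; rw [h1, add_assoc, zmm, add_zero]

end Quaternion

section QuaternionMain

lemma q_vertexConn {m : ℕ} (hm : 2 ≤ m) :
    vertexConn (powerGraph (QuaternionGroup m)) = 2 := by
  haveI : NeZero m := ⟨by omega⟩
  have h1axa : (1 : QuaternionGroup m) ≠ QuaternionGroup.xa 0 := by
    rw [QuaternionGroup.one_def]
    exact fun hh => (by cases hh)
  unfold vertexConn
  apply sInf_eq_two
  · -- S = {1, a m} disconnects
    refine ⟨{1, QuaternionGroup.a (m : ZMod (2*m))}, ?_, Or.inl ?_⟩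
    · refine Set.ncard_pair ?_
      rw [QuaternionGroup.one_def, Ne, QuaternionGroup.a.injEq]
      exact fun hh => q_hm0 hm hh.symm
    · intro hconn
      have hreach := hconn.preconnected ⟨QuaternionGroup.xa 0, q_xa_mem 0⟩
        ⟨QuaternionGroup.a 1, q_a1_mem hm⟩
      have hmem := reach_mem (q_pair_closed hm 0) hreach (Or.inl rfl)
      rcases hmem with h | h <;> exact (by cases h)
  · -- removing nothing leaves it connected and big
    rintro ⟨S, hcard, hbad⟩
    have hS : S = ∅ := (Set.ncard_eq_zero (Set.toFinite S)).mp hcard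
    subst hS
    rcases hbad with hbad | hbad
    · exact hbad ((connected_iff _).mpr
        ⟨preconn_compl_of_one_not_mem (by simp), ⟨⟨1, by simp⟩⟩⟩)
    · exact h1axa (hbad (by simp) (by simp))
  · -- removing one vertex leaves it connected and big
    rintro ⟨S, hcard, hbad⟩
    obtain ⟨x, rfl⟩ := Set.ncard_eq_one.mp hcard
    rcases hbad with hbad | hbad
    · apply hbad
      rw [connected_iff]
      constructor
      · by_cases hx1 : x = 1
        · subst hx1
          refine q_preconn _ (Or.inl rfl) ?_ ?_
          · rw [Set.mem_singleton_iff, QuaternionGroup.one_def, QuaternionGroup.a.injEq]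
            exact q_h10 hm
          · rw [Set.mem_singleton_iff, QuaternionGroup.one_def, QuaternionGroup.a.injEq]
            exact q_hm0 hm
        · exact preconn_compl_of_one_not_mem
            (fun h => hx1 (Set.mem_singleton_iff.mp h).symm)
      · by_cases hx : x = QuaternionGroup.xa 0
        · exact ⟨⟨1, Set.mem_compl_singleton_iff.mpr (hx ▸ h1axa)⟩⟩
        · exact ⟨⟨QuaternionGroup.xa 0, Set.mem_compl_singleton_iff.mpr
            (fun h => hx h.symm)⟩⟩
    · refine not_subsing_compl_singleton (a := (1 : QuaternionGroup m))
        (b := QuaternionGroup.a 1) (c := QuaternionGroup.xa 0) ?_ ?_ ?_ hbad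
      · rw [QuaternionGroup.one_def, Ne, QuaternionGroup.a.injEq]
        exact fun hh => q_h10 hm hh.symm
      · exact h1axa
      · exact fun hh => (by cases hh)

lemma q_pair_cutset {m : ℕ} (hm : 2 ≤ m) (y : QuaternionGroup m) (hy : y ≠ 1)
    (hS : IsCyclicCutset (powerGraph (QuaternionGroup m)) {1, y}) : False := by
  haveI : NeZero m := ⟨by omega⟩
  by_cases hym : y = QuaternionGroup.a (m : ZMod (2*m))
  · -- the interesting case: S = {1, a m}
    subst hym
    obtain ⟨u, v, hnr, hu, hv⟩ := hS
    have key : ∀ t : ↥(({1, QuaternionGroup.a (m : ZMod (2*m))} :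
          Set (QuaternionGroup m))ᶜ),
        InCyclicComp ((powerGraph (QuaternionGroup m)).induce
          ({1, QuaternionGroup.a (m : ZMod (2*m))} : Set (QuaternionGroup m))ᶜ) t →
        ((powerGraph (QuaternionGroup m)).induce
          ({1, QuaternionGroup.a (m : ZMod (2*m))} : Set (QuaternionGroup m))ᶜ).Reachable t
          ⟨QuaternionGroup.a 1, q_a1_mem hm⟩ := by
      rintro ⟨t, ht⟩ ⟨w, hrw, c, hc⟩
      cases t with
      | a j =>
          by_cases hj : j = 1
          · subst hj; exact Reachable.refl _
          · refine Adj.reachable ?_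
            show (powerGraph (QuaternionGroup m)).Adj (QuaternionGroup.a j)
              (QuaternionGroup.a 1)
            exact adj_of_mem_zpowers (by rw [Ne, QuaternionGroup.a.injEq]; exact hj)
              (q_a_mem_zpowers_a (Or.inl rfl) j)
      | xa i =>
          exfalso
          have hw := reach_mem (q_pair_closed hm i) hrw (Or.inl rfl)
          refine cycle_not_in_pair (a := ⟨QuaternionGroup.xa i, q_xa_mem i⟩)
            (b := ⟨QuaternionGroup.xa (i + (m : ZMod (2*m))), q_xa_mem _⟩) hc ?_
          intro x hx
          rcases walk_support_mem (q_pair_closed hm i) c hw x hx with h | h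
          · exact Or.inl (Subtype.ext h)
          · exact Or.inr (Subtype.ext h)
    exact hnr ((key u hu).trans ((key v hv).symm))
  · -- otherwise the complement stays connected
    by_cases hy1 : y = QuaternionGroup.a 1
    · refine not_cyclicCutset_of_preconn (q_preconn _ (Or.inr rfl) ?_ ?_) hS
      · simp only [Set.mem_insert_iff, Set.mem_singleton_iff]
        rintro (h | h)
        · rw [QuaternionGroup.one_def, QuaternionGroup.a.injEq] at h
          exact q_hneg0 hm h
        · rw [hy1, QuaternionGroup.a.injEq] at h
          exact q_hneg1 hm h
      · simp only [Set.mem_insert_iff, Set.mem_singleton_iff]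
        rintro (h | h)
        · rw [QuaternionGroup.one_def, QuaternionGroup.a.injEq] at h
          exact q_hm0 hm h
        · exact hym h.symm
    · refine not_cyclicCutset_of_preconn (q_preconn _ (Or.inl rfl) ?_ ?_) hS
      · simp only [Set.mem_insert_iff, Set.mem_singleton_iff]
        rintro (h | h)
        · rw [QuaternionGroup.one_def, QuaternionGroup.a.injEq] at h
          exact q_h10 hm h
        · exact hy1 h.symm
      · simp only [Set.mem_insert_iff, Set.mem_singleton_iff]
        rintro (h | h)
        · rw [QuaternionGroup.one_def, QuaternionGroup.a.injEq] at h
          exact q_hm0 hm h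
        · exact hym h.symm

lemma q_cutset {m : ℕ} (hm : 2 ≤ m) (S : Set (QuaternionGroup m))
    (hS : IsCyclicCutset (powerGraph (QuaternionGroup m)) S) : 3 ≤ S.ncard := by
  haveI : NeZero m := ⟨by omega⟩
  by_contra hlt
  push_neg at hlt
  rcases (by omega : S.ncard = 0 ∨ S.ncard = 1 ∨ S.ncard = 2) with h | h | h
  · have hS0 : S = ∅ := (Set.ncard_eq_zero (Set.toFinite S)).mp h
    subst hS0
    exact not_cyclicCutset_of_preconn (preconn_compl_of_one_not_mem (by simp)) hS
  · obtain ⟨x, rfl⟩ := Set.ncard_eq_one.mp h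
    by_cases hx : x = 1
    · subst hx
      refine not_cyclicCutset_of_preconn (q_preconn _ (Or.inl rfl) ?_ ?_) hS
      · rw [Set.mem_singleton_iff, QuaternionGroup.one_def, QuaternionGroup.a.injEq]
        exact q_h10 hm
      · rw [Set.mem_singleton_iff, QuaternionGroup.one_def, QuaternionGroup.a.injEq]
        exact q_hm0 hm
    · exact not_cyclicCutset_of_preconn (preconn_compl_of_one_not_mem
        (fun h => hx (Set.mem_singleton_iff.mp h).symm)) hS
  · obtain ⟨x, y, hxy, rfl⟩ := Set.ncard_eq_two.mp h
    by_cases h1 : (1 : QuaternionGroup m) ∈ ({x, y} : Set (QuaternionGroup m))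
    · rcases h1 with h1 | h1
      · -- x = 1
        rw [← h1] at hS
        exact q_pair_cutset hm y (fun hh => hxy (h1.symm.trans hh.symm)) hS
      · -- y = 1
        rw [Set.mem_singleton_iff] at h1
        rw [Set.pair_comm, ← h1] at hS
        exact q_pair_cutset hm x (fun hh => hxy (hh.trans h1)) hS
    · exact not_cyclicCutset_of_preconn (preconn_compl_of_one_not_mem h1) hS

end QuaternionMain

/-- For dihedral and dicyclic groups, vertex connectivity and cyclic vertex
connectivity of the power graph are never equal. -/
theorem stmt19 (n m : ℕ) (hn : 3 ≤ n) (hm : 2 ≤ m) :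
    vertexConn (powerGraph (DihedralGroup n)) = 1 ∧
    1 < cyclicVertexConn (powerGraph (DihedralGroup n)) ∧
    ((vertexConn (powerGraph (DihedralGroup n)) : ℕ∞)
      ≠ cyclicVertexConn (powerGraph (DihedralGroup n))) ∧
    vertexConn (powerGraph (QuaternionGroup m)) = 2 ∧
    2 < cyclicVertexConn (powerGraph (QuaternionGroup m)) ∧
    ((vertexConn (powerGraph (QuaternionGroup m)) : ℕ∞)
      ≠ cyclicVertexConn (powerGraph (QuaternionGroup m))) := by
  have hD1 := d_vertexConn hn
  have hQ1 := q_vertexConn hm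
  have hD2 : (1 : ℕ∞) < cyclicVertexConn (powerGraph (DihedralGroup n)) := by
    have := lt_cyclicVertexConn 1 (fun S hS => d_cutset hn S hS)
    exact_mod_cast this
  have hQ2 : (2 : ℕ∞) < cyclicVertexConn (powerGraph (QuaternionGroup m)) := by
    have := lt_cyclicVertexConn 2 (fun S hS => q_cutset hm S hS)
    exact_mod_cast this
  refine ⟨hD1, hD2, ?_, hQ1, hQ2, ?_⟩
  · rw [hD1, Nat.cast_one]
    exact ne_of_lt hD2
  · rw [hQ1]
    exact ne_of_lt (by exact_mod_cast hQ2)
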